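/- arXiv:2409.02089 — 2 statements merged into one kernel-verified Lean document; each statement's English description precedes it below -/
import Mathlib

section
/- Let γ > 0 and define h : ℤ₊ → ℝ by h(k) = k·log(1 + γ/k²), and let r ∈ (0,1) be the global maximizer of g(x) = x·log(1 + 1/x²) over (0,∞). Assume r√γ ≥ 1. Then for every positive integer k, h(k) ≤ max( h(⌊r√γ⌋), h(⌈r√γ⌉) ); that is, the maximum of h over the positive integers is attained at ⌊r√γ⌋ or at ⌈r√γ⌉. This follows from the identity h(k) = √γ · g(k/√γ) together with the concavity of g on the relevant interval. -/
/-- Uniform-allocation objective `h k = k log (1 + γ/k²)`. -/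
noncomputable def hWF (γ : ℝ) (k : ℕ) : ℝ := (k : ℝ) * Real.log (1 + γ / (k : ℝ) ^ 2)

noncomputable def gWF (x : ℝ) : ℝ := x * Real.log (1 + 1 / x ^ 2)

noncomputable def phiWF (u : ℝ) : ℝ := 2 * u / (1 + u) - Real.log (1 + u)

lemma hasDerivAt_gWF (x : ℝ) (hx : 0 < x) :
    HasDerivAt gWF (Real.log (1 + 1 / x ^ 2) - 2 / (x ^ 2 + 1)) x := by
  have hx2 : (x : ℝ) ^ 2 ≠ 0 := by positivity
  have hpos : (0 : ℝ) < 1 + 1 / x ^ 2 := by positivity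
  have h1 : HasDerivAt (fun x : ℝ => 1 + 1 / x ^ 2) (-(2 * x) / (x ^ 2) ^ 2) x := by
    have := ((hasDerivAt_pow 2 x).inv hx2).const_add 1
    simpa using this
  have h2 : HasDerivAt (fun x : ℝ => Real.log (1 + 1 / x ^ 2))
      (-(2 * x) / (x ^ 2) ^ 2 / (1 + 1 / x ^ 2)) x := h1.log (ne_of_gt hpos)
  have h3 := (hasDerivAt_id x).mul h2
  refine HasDerivAt.congr_deriv h3 ?_
  simp only [id]
  field_simp
  ring

lemma hasDerivAt_phiWF (u : ℝ) (hu : -1 < u) :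
    HasDerivAt phiWF ((1 - u) / (1 + u) ^ 2) u := by
  have hne : (1 : ℝ) + u ≠ 0 := by linarith
  have h1 : HasDerivAt (fun u : ℝ => 2 * u / (1 + u))
      ((2 * (1 + u) - 2 * u * 1) / (1 + u) ^ 2) u := by
    have := ((hasDerivAt_id u).const_mul 2).div ((hasDerivAt_id u).const_add 1) hne
    simpa [Pi.div_def] using this
  have h2 : HasDerivAt (fun u : ℝ => Real.log (1 + u)) (1 / (1 + u)) u := by
    simpa using ((hasDerivAt_id u).const_add 1).log hne
  have h3 := h1.sub h2
  refine HasDerivAt.congr_deriv h3 ?_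
  field_simp
  ring

lemma phiWF_mono : MonotoneOn phiWF (Set.Icc (0 : ℝ) 1) := by
  apply monotoneOn_of_deriv_nonneg (convex_Icc 0 1)
  · intro x hx
    exact (hasDerivAt_phiWF x (by linarith [hx.1])).continuousAt.continuousWithinAt
  · intro x hx
    rw [interior_Icc] at hx
    exact (hasDerivAt_phiWF x (by linarith [hx.1])).differentiableAt.differentiableWithinAt
  · intro x hx
    rw [interior_Icc] at hx
    rw [(hasDerivAt_phiWF x (by linarith [hx.1])).deriv]
    have h1 : (0:ℝ) < 1 + x := by linarith [hx.1]
    have : (0:ℝ) ≤ 1 - x := by linarith [hx.2]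
    positivity

lemma phiWF_anti : AntitoneOn phiWF (Set.Ici (1 : ℝ)) := by
  apply antitoneOn_of_deriv_nonpos (convex_Ici 1)
  · intro x hx
    exact (hasDerivAt_phiWF x (by simp at hx; linarith)).continuousAt.continuousWithinAt
  · intro x hx
    rw [interior_Ici] at hx
    exact (hasDerivAt_phiWF x (by simp at hx; linarith)).differentiableAt.differentiableWithinAt
  · intro x hx
    rw [interior_Ici] at hx
    simp only [Set.mem_Ioi] at hx
    rw [(hasDerivAt_phiWF x (by linarith)).deriv]
    have h1 : (0:ℝ) < (1 + x) ^ 2 := by positivity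
    have h2 : (1:ℝ) - x ≤ 0 := by linarith
    exact div_nonpos_of_nonpos_of_nonneg h2 h1.le

lemma phiWF_zero : phiWF 0 = 0 := by simp [phiWF]

/-- `φ(1/x²) = 2/(x²+1) - log(1+1/x²)` for `x ≠ 0`. -/
lemma phiWF_inv_sq (x : ℝ) (hx : x ≠ 0) :
    phiWF (1 / x ^ 2) = 2 / (x ^ 2 + 1) - Real.log (1 + 1 / x ^ 2) := by
  unfold phiWF
  congr 1
  field_simp

/-- If `r ∈ (0,1)` is the global maximizer of
`g x = x log (1 + 1/x²)` on `(0, ∞)` and `r √γ ≥ 1`, then the maximum of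
`h k = k log (1 + γ/k²)` over positive integers is attained at `⌊r √γ⌋` or
`⌈r √γ⌉`. -/
theorem stmt_14 (γ : ℝ) (hγ : 0 < γ) (r : ℝ) (hr : r ∈ Set.Ioo (0 : ℝ) 1)
    (hrmax : ∀ x : ℝ, 0 < x →
      x * Real.log (1 + 1 / x ^ 2) ≤ r * Real.log (1 + 1 / r ^ 2))
    (hge1 : 1 ≤ r * Real.sqrt γ) :
    ∀ k : ℕ, 0 < k →
      hWF γ k ≤ max (hWF γ ⌊r * Real.sqrt γ⌋₊) (hWF γ ⌈r * Real.sqrt γ⌉₊) := by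
  obtain ⟨hr0, hr1⟩ := hr
  set s := Real.sqrt γ with hs_def
  have hs : 0 < s := Real.sqrt_pos.2 hγ
  have hs2 : s ^ 2 = γ := Real.sq_sqrt hγ.le
  -- the local max gives deriv g r = 0
  have hloc : IsLocalMax gWF r := by
    filter_upwards [Ioi_mem_nhds hr0] with x hx using hrmax x hx
  have hderiv0 : Real.log (1 + 1 / r ^ 2) - 2 / (r ^ 2 + 1) = 0 := by
    have := hloc.deriv_eq_zero
    rwa [(hasDerivAt_gWF r hr0).deriv] at this
  -- φ(1/r²) = 0
  have hustar1 : (1:ℝ) ≤ 1 / r ^ 2 := by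
    rw [le_div_iff₀ (by positivity)]
    nlinarith
  have hphistar : phiWF (1 / r ^ 2) = 0 := by
    rw [phiWF_inv_sq r (ne_of_gt hr0)]
    linarith
  -- φ ≥ 0 on [0, 1/r²]
  have hphi_nonneg : ∀ u : ℝ, 0 ≤ u → u ≤ 1 / r ^ 2 → 0 ≤ phiWF u := by
    intro u hu0 hu1
    rcases le_or_gt u 1 with h | h
    · have := phiWF_mono (Set.mem_Icc.2 ⟨le_refl 0, zero_le_one⟩)
        (Set.mem_Icc.2 ⟨hu0, h⟩) hu0
      rwa [phiWF_zero] at this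
    · have := phiWF_anti (Set.mem_Ici.2 h.le) (Set.mem_Ici.2 (le_trans h.le hu1)) hu1
      rwa [hphistar] at this
  -- φ ≤ 0 on [1/r², ∞)
  have hphi_nonpos : ∀ u : ℝ, 1 / r ^ 2 ≤ u → phiWF u ≤ 0 := by
    intro u hu
    have := phiWF_anti (Set.mem_Ici.2 hustar1) (Set.mem_Ici.2 (le_trans hustar1 hu)) hu
    rwa [hphistar] at this
  -- g is monotone on (0, r]
  have hgmono : MonotoneOn gWF (Set.Ioc 0 r) := by
    apply monotoneOn_of_deriv_nonneg (convex_Ioc 0 r)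
    · intro x hx
      exact (hasDerivAt_gWF x hx.1).continuousAt.continuousWithinAt
    · intro x hx
      rw [interior_Ioc] at hx
      exact (hasDerivAt_gWF x hx.1).differentiableAt.differentiableWithinAt
    · intro x hx
      rw [interior_Ioc] at hx
      obtain ⟨hx0, hxr⟩ := hx
      rw [(hasDerivAt_gWF x hx0).deriv]
      have h1 : 1 / r ^ 2 ≤ 1 / x ^ 2 := by
        apply div_le_div_of_nonneg_left one_pos.le (by positivity)
        nlinarith
      have := hphi_nonpos _ h1
      rw [phiWF_inv_sq x (ne_of_gt hx0)] at this
      linarith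
  -- g is antitone on [r, ∞)
  have hganti : AntitoneOn gWF (Set.Ici r) := by
    apply antitoneOn_of_deriv_nonpos (convex_Ici r)
    · intro x hx
      exact (hasDerivAt_gWF x (lt_of_lt_of_le hr0 hx)).continuousAt.continuousWithinAt
    · intro x hx
      rw [interior_Ici] at hx
      exact (hasDerivAt_gWF x (lt_trans hr0 hx)).differentiableAt.differentiableWithinAt
    · intro x hx
      rw [interior_Ici] at hx
      simp only [Set.mem_Ioi] at hx
      have hx0 : 0 < x := lt_trans hr0 hx
      rw [(hasDerivAt_gWF x hx0).deriv]
      have h1 : 1 / x ^ 2 ≤ 1 / r ^ 2 := by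
        apply div_le_div_of_nonneg_left one_pos.le (by positivity)
        nlinarith
      have := hphi_nonneg (1 / x ^ 2) (by positivity) h1
      rw [phiWF_inv_sq x (ne_of_gt hx0)] at this
      linarith
  -- h k = s * g (k/s)
  have hWF_eq : ∀ k : ℕ, 0 < k → hWF γ k = s * gWF ((k : ℝ) / s) := by
    intro k hk
    have hk0 : (0:ℝ) < (k : ℝ) := by exact_mod_cast hk
    unfold hWF gWF
    have h1 : 1 / ((k : ℝ) / s) ^ 2 = γ / (k : ℝ) ^ 2 := by
      rw [div_pow, ← hs2]
      field_simp
    rw [h1]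
    field_simp
  set t := r * s with ht_def
  have ht1 : (1:ℝ) ≤ t := hge1
  have hF1 : 1 ≤ ⌊t⌋₊ := Nat.le_floor (by exact_mod_cast ht1)
  have hFt : (⌊t⌋₊ : ℝ) ≤ t := Nat.floor_le (by linarith)
  have htC : t ≤ (⌈t⌉₊ : ℝ) := Nat.le_ceil t
  have hC1 : 1 ≤ ⌈t⌉₊ := le_trans hF1 (Nat.floor_le_ceil t)
  intro k hk
  rcases le_or_gt k ⌊t⌋₊ with hkF | hkF
  · -- k ≤ floor : use monotonicity
    refine le_trans ?_ (le_max_left _ _)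
    rw [hWF_eq k hk, hWF_eq ⌊t⌋₊ hF1]
    have hk0 : (0:ℝ) < (k : ℝ) := by exact_mod_cast hk
    have hkF' : (k : ℝ) ≤ (⌊t⌋₊ : ℝ) := by exact_mod_cast hkF
    have hmemk : (k : ℝ) / s ∈ Set.Ioc (0:ℝ) r := by
      constructor
      · positivity
      · rw [div_le_iff₀ hs]; linarith
    have hmemF : (⌊t⌋₊ : ℝ) / s ∈ Set.Ioc (0:ℝ) r := by
      constructor
      · have : (0:ℝ) < (⌊t⌋₊ : ℝ) := by exact_mod_cast hF1
        positivity
      · rw [div_le_iff₀ hs]; linarith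
    have hle : (k : ℝ) / s ≤ (⌊t⌋₊ : ℝ) / s := by gcongr
    exact mul_le_mul_of_nonneg_left (hgmono hmemk hmemF hle) hs.le
  · -- k > floor, so k ≥ ceil : use antitonicity
    refine le_trans ?_ (le_max_right _ _)
    rw [hWF_eq k hk, hWF_eq ⌈t⌉₊ hC1]
    have hkt : t ≤ (k : ℝ) := by
      have : (⌊t⌋₊ : ℝ) + 1 ≤ (k : ℝ) := by exact_mod_cast hkF
      have := Nat.lt_floor_add_one t
      linarith
    have hkC : ⌈t⌉₊ ≤ k := Nat.ceil_le.2 hkt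
    have hkC' : (⌈t⌉₊ : ℝ) ≤ (k : ℝ) := by exact_mod_cast hkC
    have hmemC : (⌈t⌉₊ : ℝ) / s ∈ Set.Ici r := by
      rw [Set.mem_Ici, le_div_iff₀ hs]; linarith
    have hmemk : (k : ℝ) / s ∈ Set.Ici r := by
      rw [Set.mem_Ici, le_div_iff₀ hs]; linarith
    have hle : (⌈t⌉₊ : ℝ) / s ≤ (k : ℝ) / s := by gcongr
    exact mul_le_mul_of_nonneg_left (hganti hmemC hmemk hle) hs.le
end

section
/- (Optimal uniform channel number.) Let γ > 0, let n ≥ 1 be an integer, define h(k) = k·log(1 + γ/k²) for positive integers k, and let r ∈ (0,1) be the global maximizer of g(x) = x·log(1 + 1/x²) over (0,∞). Define n_opt as follows: if ⌊r√γ⌋ ≥ n then n_opt = n; if 1 ≤ ⌊r√γ⌋ < n then n_opt ∈ {⌊r√γ⌋, ⌈r√γ⌉} is whichever gives the larger value of h; and if r√γ < 1 then n_opt = 1. Then for every integer k with 1 ≤ k ≤ n, h(k) ≤ h(n_opt) = n_opt · log(1 + γ/n_opt²). -/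
noncomputable def gg (x : ℝ) : ℝ := x * Real.log (1 + 1 / x ^ 2)
noncomputable def gg' (x : ℝ) : ℝ := Real.log (1 + 1 / x ^ 2) - 2 / (1 + x ^ 2)

lemma one_add_pos {x : ℝ} (hx : 0 < x) : (0:ℝ) < 1 + 1 / x ^ 2 := by positivity

lemma hasDerivAt_inner {x : ℝ} (hx : x ≠ 0) :
    HasDerivAt (fun y : ℝ => 1 + 1 / y ^ 2) (-2 / x ^ 3) x := by
  have h : HasDerivAt (fun y : ℝ => (y ^ 2)⁻¹) (-(((2:ℕ) : ℝ) * x ^ 1) / (x ^ 2) ^ 2) x :=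
    (hasDerivAt_pow 2 x).inv (pow_ne_zero 2 hx)
  have h2 : HasDerivAt (fun y : ℝ => 1 + 1 / y ^ 2) (-(((2:ℕ) : ℝ) * x ^ 1) / (x ^ 2) ^ 2) x := by
    simpa [one_div] using h.const_add 1
  convert h2 using 1
  field_simp
  ring

lemma hasDerivAt_gg {x : ℝ} (hx : 0 < x) : HasDerivAt gg (gg' x) x := by
  have hx0 : x ≠ 0 := hx.ne'
  have hne : 1 + 1 / x ^ 2 ≠ 0 := (one_add_pos hx).ne'
  have hlog : HasDerivAt (fun y : ℝ => Real.log (1 + 1 / y ^ 2))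
      ((-2 / x ^ 3) / (1 + 1 / x ^ 2)) x := (hasDerivAt_inner hx0).log hne
  have h := (hasDerivAt_id x).mul hlog
  refine h.congr_deriv ?_
  unfold gg'
  simp only [id_eq]
  have hne2 : (1:ℝ) + x ^ 2 ≠ 0 := by positivity
  field_simp
  ring

lemma hasDerivAt_gg' {x : ℝ} (hx : 0 < x) :
    HasDerivAt gg' (2 * (x ^ 2 - 1) / (x * (1 + x ^ 2) ^ 2)) x := by
  have hx0 : x ≠ 0 := hx.ne'
  have hne : 1 + 1 / x ^ 2 ≠ 0 := (one_add_pos hx).ne'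
  have hlog : HasDerivAt (fun y : ℝ => Real.log (1 + 1 / y ^ 2))
      ((-2 / x ^ 3) / (1 + 1 / x ^ 2)) x := (hasDerivAt_inner hx0).log hne
  have hne2 : (1:ℝ) + x ^ 2 ≠ 0 := by positivity
  have hden : HasDerivAt (fun y : ℝ => 1 + y ^ 2) (2 * x) x := by
    simpa using (hasDerivAt_pow 2 x).const_add 1
  have hfrac : HasDerivAt (fun y : ℝ => 2 / (1 + y ^ 2))
      (-(2 * (2 * x)) / (1 + x ^ 2) ^ 2) x := by
    simpa [div_eq_mul_inv, neg_div, mul_div_assoc, mul_assoc] using (hden.inv hne2).const_mul 2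
  have h := hlog.sub hfrac
  refine h.congr_deriv ?_
  field_simp
  ring

/-- `gg'` is strictly decreasing on `(0,1]`. -/
lemma gg'_strictAnti : StrictAntiOn gg' (Set.Ioc 0 1) := by
  apply strictAntiOn_of_deriv_neg (convex_Ioc 0 1)
  · intro x hx
    exact ((hasDerivAt_gg' hx.1).continuousAt).continuousWithinAt
  · intro x hx
    rw [interior_Ioc] at hx
    rw [(hasDerivAt_gg' hx.1).deriv]
    have h1 : x ^ 2 - 1 < 0 := by nlinarith [hx.1, hx.2]
    have h2 : 0 < x * (1 + x ^ 2) ^ 2 := mul_pos hx.1 (by positivity)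
    exact div_neg_of_neg_of_pos (by linarith) h2

/-- `gg' x < 0` for `x ≥ 1`, by `log (1+t) < t ≤ 2t/(1+t)` for `t = 1/x² ∈ (0,1]`. -/
lemma gg'_neg_of_one_le {x : ℝ} (hx : 1 ≤ x) : gg' x < 0 := by
  have hx0 : 0 < x := lt_of_lt_of_le one_pos hx
  set t : ℝ := 1 / x ^ 2 with ht
  have ht0 : 0 < t := by positivity
  have ht1 : t ≤ 1 := by
    rw [ht, div_le_one (by positivity)]
    nlinarith
  have hlog : Real.log (1 + t) < t := by
    have := Real.log_lt_sub_one_of_pos (show (0:ℝ) < 1 + t by linarith)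
      (by intro h; nlinarith)
    linarith
  have hfrac : 2 / (1 + x ^ 2) = 2 * t / (1 + t) := by
    rw [ht]
    field_simp
    ring
  have ht2 : t ≤ 2 * t / (1 + t) := by
    rw [le_div_iff₀ (by linarith)]
    nlinarith
  unfold gg'
  rw [hfrac, ← ht]
  linarith

section withR

variable {r : ℝ} (hr : r ∈ Set.Ioo (0:ℝ) 1) (hr0 : gg' r = 0)

include hr hr0 in
lemma gg'_pos_left {x : ℝ} (hx : 0 < x) (hxr : x < r) : 0 < gg' x := by
  have := gg'_strictAnti ⟨hx, le_of_lt (hxr.trans hr.2)⟩ ⟨hr.1, hr.2.le⟩ hxr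
  linarith [hr0 ▸ this]

include hr hr0 in
lemma gg'_neg_right {x : ℝ} (hxr : r < x) : gg' x < 0 := by
  rcases le_or_gt x 1 with h | h
  · have := gg'_strictAnti ⟨hr.1, hr.2.le⟩ ⟨hr.1.trans hxr, h⟩ hxr
    linarith [hr0 ▸ this]
  · exact gg'_neg_of_one_le h.le

include hr hr0 in
lemma gg_mono : MonotoneOn gg (Set.Ioc 0 r) := by
  apply StrictMonoOn.monotoneOn
  apply strictMonoOn_of_deriv_pos (convex_Ioc 0 r)
  · intro x hx
    exact ((hasDerivAt_gg hx.1).continuousAt).continuousWithinAt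
  · intro x hx
    rw [interior_Ioc] at hx
    rw [(hasDerivAt_gg hx.1).deriv]
    exact gg'_pos_left hr hr0 hx.1 hx.2

include hr hr0 in
lemma gg_anti : AntitoneOn gg (Set.Ici r) := by
  apply StrictAntiOn.antitoneOn
  apply strictAntiOn_of_deriv_neg (convex_Ici r)
  · intro x hx
    exact ((hasDerivAt_gg (hr.1.trans_le hx)).continuousAt).continuousWithinAt
  · intro x hx
    rw [interior_Ici] at hx
    rw [(hasDerivAt_gg (hr.1.trans hx)).deriv]
    exact gg'_neg_right hr hr0 hx

end withR



/-- Optimal uniform channel number.  With `r ∈ (0,1)` the global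
maximizer of `g x = x log (1 + 1/x²)` on `(0,∞)` and `n_opt` defined by cases
(`n_opt = n` if `⌊r√γ⌋ ≥ n`; `n_opt ∈ {⌊r√γ⌋, ⌈r√γ⌉}` maximizing `h` if
`1 ≤ ⌊r√γ⌋ < n`; `n_opt = 1` if `r√γ < 1`), one has
`h k ≤ h n_opt = n_opt log (1 + γ/n_opt²)` for all `1 ≤ k ≤ n`. -/
theorem stmt_15 (γ : ℝ) (hγ : 0 < γ) (n : ℕ) (hn : 1 ≤ n)
    (r : ℝ) (hr : r ∈ Set.Ioo (0 : ℝ) 1)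
    (hrmax : ∀ x : ℝ, 0 < x →
      x * Real.log (1 + 1 / x ^ 2) ≤ r * Real.log (1 + 1 / r ^ 2))
    (nopt : ℕ)
    (hcase1 : n ≤ ⌊r * Real.sqrt γ⌋₊ → nopt = n)
    (hcase2 : 1 ≤ ⌊r * Real.sqrt γ⌋₊ → ⌊r * Real.sqrt γ⌋₊ < n →
      (nopt = ⌊r * Real.sqrt γ⌋₊ ∨ nopt = ⌈r * Real.sqrt γ⌉₊) ∧
      hWF γ nopt = max (hWF γ ⌊r * Real.sqrt γ⌋₊) (hWF γ ⌈r * Real.sqrt γ⌉₊))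
    (hcase3 : r * Real.sqrt γ < 1 → nopt = 1) :
    ∀ k : ℕ, 1 ≤ k → k ≤ n →
      hWF γ k ≤ hWF γ nopt ∧
      hWF γ nopt = (nopt : ℝ) * Real.log (1 + γ / (nopt : ℝ) ^ 2) := by
  set s : ℝ := Real.sqrt γ with hs_def
  have hs : 0 < s := Real.sqrt_pos.2 hγ
  have hs2 : s ^ 2 = γ := Real.sq_sqrt hγ.le
  -- gg' r = 0
  have hloc : IsLocalMax gg r := by
    filter_upwards [Ioi_mem_nhds hr.1] with x hx using hrmax x hx
  have hr0 : gg' r = 0 := hloc.hasDerivAt_eq_zero (hasDerivAt_gg hr.1)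
  -- hWF rewrite
  have hWF_eq : ∀ k : ℕ, 1 ≤ k → hWF γ k = s * gg ((k : ℝ) / s) := by
    intro k hk
    have hk0 : (0:ℝ) < (k : ℝ) := by exact_mod_cast hk
    unfold hWF gg
    rw [div_pow, one_div_div, hs2]
    field_simp
  -- monotone comparison on the left of r*s
  have left_le : ∀ a b : ℕ, 1 ≤ a → a ≤ b → (b : ℝ) ≤ r * s →
      hWF γ a ≤ hWF γ b := by
    intro a b ha hab hb
    have ha0 : (0:ℝ) < (a : ℝ) := by exact_mod_cast ha
    have hb0 : (0:ℝ) < (b : ℝ) := lt_of_lt_of_le ha0 (by exact_mod_cast hab)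
    have hbr : (b : ℝ) / s ≤ r := by
      rw [div_le_iff₀ hs]; linarith
    have hab' : (a:ℝ) ≤ (b:ℝ) := by exact_mod_cast hab
    have har : (a : ℝ) / s ≤ r := le_trans (by gcongr) hbr
    rw [hWF_eq a ha, hWF_eq b (ha.trans hab)]
    apply mul_le_mul_of_nonneg_left _ hs.le
    apply gg_mono hr hr0 ⟨by positivity, har⟩ ⟨by positivity, hbr⟩
    gcongr
  -- antitone comparison on the right of r*s
  have right_le : ∀ a b : ℕ, 1 ≤ a → a ≤ b → r * s ≤ (a : ℝ) →
      hWF γ b ≤ hWF γ a := by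
    intro a b ha hab hra
    have har : r ≤ (a : ℝ) / s := by rw [le_div_iff₀ hs]; linarith
    have hab' : (a:ℝ) ≤ (b:ℝ) := by exact_mod_cast hab
    have hbr : r ≤ (b : ℝ) / s := le_trans har (by gcongr)
    rw [hWF_eq a ha, hWF_eq b (ha.trans hab)]
    apply mul_le_mul_of_nonneg_left _ hs.le
    apply gg_anti hr hr0 har hbr
    gcongr
  intro k hk hkn
  refine ⟨?_, rfl⟩
  set m : ℕ := ⌊r * s⌋₊ with hm_def
  have hrs_pos : 0 < r * s := mul_pos hr.1 hs
  have hm_le : (m : ℝ) ≤ r * s := Nat.floor_le hrs_pos.le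
  rcases le_or_gt n m with h1 | h1
  · -- case 1
    rw [hcase1 h1]
    exact left_le k n hk hkn (le_trans (by exact_mod_cast h1) hm_le)
  · rcases le_or_gt 1 m with h2 | h2
    · -- case 2
      obtain ⟨-, hmax⟩ := hcase2 h2 h1
      rcases le_or_gt k m with hkm | hkm
      · have := left_le k m hk hkm hm_le
        rw [hmax]
        exact this.trans (le_max_left _ _)
      · -- k ≥ m + 1 ≥ ceil ≥ r*s
        have hceil : r * s ≤ (⌈r * s⌉₊ : ℝ) := Nat.le_ceil _
        have hc1 : 1 ≤ ⌈r * s⌉₊ := le_trans h2 (Nat.floor_le_ceil _)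
        have hck : ⌈r * s⌉₊ ≤ k :=
          le_trans (Nat.ceil_le_floor_add_one _) hkm
        have := right_le ⌈r * s⌉₊ k hc1 hck hceil
        rw [hmax]
        exact this.trans (le_max_right _ _)
    · -- case 3 : m = 0, so r*s < 1
      have hrs1 : r * s < 1 := by
        have : m = 0 := by omega
        have := Nat.floor_eq_zero.1 this
        exact this
      rw [hcase3 hrs1]
      exact right_le 1 k le_rfl hk (by norm_num; linarith)
end
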